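/- Let S = k[x_0, ..., x_n] be a Z-graded polynomial ring with deg(x_i) = d_i positive integers in increasing order, M a finitely generated graded S-module with M_0 ≠ 0 and M_{<0} = 0, and suppose x_ℓ is a non-zero-divisor on M. Define w'_i = w_i for i < ℓ and w'_i = w_{i+1} − d_ℓ for i ≥ ℓ, where w_i is the sum of the i smallest weights. Then β_{i,j}(M) ≠ 0 implies j ≥ w'_i. -/

import Mathlib

open MvPolynomial

/-- A minimal graded free resolution of a graded module `M` over the weighted
polynomial ring `S = k[x_0, ..., x_n]` with `deg x_t = d t`.  The `i`-th free module
`F_i` has basis `B i`, with the basis element `b` a generator of degree `deg i b`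
(so `F_i = ⊕_b S(-deg i b)`).  The graded Betti number `β_{i,j}(M)` is the number of
`b : B i` with `deg i b = j`. -/
structure GradedFreeRes (k : Type) [Field k] (n : ℕ) (d : Fin (n + 1) → ℕ)
    (M : Type) [AddCommGroup M] [Module (MvPolynomial (Fin (n + 1)) k) M]
    [Module k M] (𝒜 : ℤ → Submodule k M) where
  B : ℕ → Type
  deg : ∀ i, B i → ℤ
  D : ∀ i, (B (i + 1) →₀ MvPolynomial (Fin (n + 1)) k) →ₗ[MvPolynomial (Fin (n + 1)) k]
      (B i →₀ MvPolynomial (Fin (n + 1)) k)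
  aug : (B 0 →₀ MvPolynomial (Fin (n + 1)) k) →ₗ[MvPolynomial (Fin (n + 1)) k] M
  aug_surj : Function.Surjective aug
  /-- the augmentation is degree-preserving -/
  aug_hom : ∀ b : B 0, aug (Finsupp.single b 1) ∈ 𝒜 (deg 0 b)
  exact_zero : Function.Exact (D 0) aug
  exact_succ : ∀ i, Function.Exact (D (i + 1)) (D i)
  /-- minimality: all matrix entries of the differentials lie in the maximal ideal -/
  minimal : ∀ (i) (b : B (i + 1)) (b' : B i), constantCoeff (D i (Finsupp.single b 1) b') = 0
  /-- the differentials are homogeneous for the weighted grading -/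
  homog : ∀ (i) (b : B (i + 1)) (b' : B i),
    D i (Finsupp.single b 1) b' ∈
      weightedHomogeneousSubmodule k (fun t => (d t : ℤ)) (deg (i + 1) b - deg i b')


section Stmt2Aux
variable {k : Type} [Field k] {n : ℕ}
local notation "SS" => MvPolynomial (Fin (n+1)) k

noncomputable def phiU (U : Finset (Fin (n+1))) : SS →ₐ[k] SS :=
  aeval (fun t => if t ∈ U then 0 else X t)

noncomputable def JU (U : Finset (Fin (n+1))) : Ideal SS :=
  Ideal.span ((fun u => (X u : SS)) '' U)

lemma mem_JU_of (U : Finset (Fin (n+1))) (u : Fin (n+1)) (hu : u ∈ U) :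
    (X u : SS) ∈ JU U :=
  Ideal.subset_span ⟨u, hu, rfl⟩

lemma cc_JU {U : Finset (Fin (n+1))} {p : SS} (hp : p ∈ JU U) :
    constantCoeff p = 0 := by
  have : JU (k := k) (n := n) U ≤ RingHom.ker (constantCoeff (R := k) (σ := Fin (n+1))) := by
    rw [JU, Ideal.span_le]
    rintro q ⟨u, _, rfl⟩
    simp [RingHom.mem_ker]
  simpa [RingHom.mem_ker] using this hp

lemma phiU_mem_zero {U : Finset (Fin (n+1))} {p : SS} (hp : p ∈ JU U) :
    phiU U p = 0 := by
  have : JU (k := k) (n := n) U ≤ RingHom.ker (phiU (k := k) (n := n) U).toRingHom := by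
    rw [JU, Ideal.span_le]
    rintro q ⟨u, hu, rfl⟩
    simp [RingHom.mem_ker, phiU]; simp_all
  simpa [RingHom.mem_ker] using this hp

lemma sub_phiU_mem (U : Finset (Fin (n+1))) (p : SS) : p - phiU U p ∈ JU U := by
  induction p using MvPolynomial.induction_on with
  | C a => simp [phiU]
  | add p q hp hq =>
      have : p + q - phiU U (p + q) = (p - phiU U p) + (q - phiU U q) := by
        rw [map_add]; ring
      rw [this]; exact Ideal.add_mem _ hp hq
  | mul_X p t hp =>
      by_cases ht : t ∈ U
      · have hX : (X t : SS) ∈ JU U := mem_JU_of U t ht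
        have : p * X t - phiU U (p * X t) = p * X t - 0 := by
          rw [map_mul]; simp [phiU, ht]
        rw [this, sub_zero]
        exact Ideal.mul_mem_left _ _ hX
      · have : p * X t - phiU U (p * X t) = (p - phiU U p) * X t := by
          rw [map_mul]; simp [phiU, ht]; ring
        rw [this]
        exact Ideal.mul_mem_right _ _ hp

lemma mem_JU_iff {U : Finset (Fin (n+1))} {p : SS} :
    p ∈ JU U ↔ phiU U p = 0 := by
  constructor
  · exact phiU_mem_zero
  · intro h
    have := sub_phiU_mem U p
    rwa [h, sub_zero] at this

lemma JU_prime {U : Finset (Fin (n+1))} {x : Fin (n+1)} (hx : x ∉ U) {p : SS}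
    (h : X x * p ∈ JU U) : p ∈ JU U := by
  rw [mem_JU_iff] at h ⊢
  rw [map_mul] at h
  have hXx : phiU (k := k) (n := n) U (X x) = X x := by simp [phiU, hx]
  rw [hXx] at h
  exact (mul_eq_zero.mp h).resolve_left (X_ne_zero x)

lemma JU_mono {U U' : Finset (Fin (n+1))} (h : U ⊆ U') : JU (k := k) (n := n) U ≤ JU U' :=
  Ideal.span_mono (Set.image_mono (by exact_mod_cast h))

lemma JU_insert_mem {U : Finset (Fin (n+1))} {x : Fin (n+1)} {p : SS}
    (hp : p ∈ JU (insert x U)) : ∃ r q : SS, q ∈ JU U ∧ p = q + X x * r := by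
  have : JU (k := k) (n := n) (insert x U) = Ideal.span {(X x : SS)} ⊔ JU U := by
    rw [JU, Finset.coe_insert, Set.image_insert_eq, Ideal.span_insert]; rfl
  rw [this] at hp
  rcases Submodule.mem_sup.mp hp with ⟨a, ha, q, hq, rfl⟩
  rcases Ideal.mem_span_singleton'.mp ha with ⟨r, rfl⟩
  exact ⟨r, q, hq, by ring⟩

/-- all monomials of `p` only involve variables in `T` -/
def SuppIn (T : Finset (Fin (n+1))) (p : SS) : Prop :=
  ∀ m ∈ p.support, ∀ t ∉ T, m t = 0

lemma suppIn_mono {T T' : Finset (Fin (n+1))} (h : T ⊆ T') {p : SS}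
    (hp : SuppIn T p) : SuppIn T' p :=
  fun m hm t ht => hp m hm t (fun c => ht (h c))

lemma X_dvd_of_suppIn {t : Fin (n+1)} {p : SS}
    (h : ∀ m ∈ p.support, m t ≠ 0) : (X t : SS) ∣ p := by
  have : p = ∑ m ∈ p.support, monomial m (coeff m p) := (support_sum_monomial_coeff p).symm
  rw [this]
  refine Finset.dvd_sum fun m hm => ?_
  rw [X_dvd_monomial]
  exact Or.inr (h m hm)

lemma suppIn_of_X_mul {t : Fin (n+1)} {T : Finset (Fin (n+1))} (ht : t ∈ T) {q : SS}
    (h : SuppIn T (X t * q)) : SuppIn T q := by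
  intro m hm s hs
  have hmem : Finsupp.single t 1 + m ∈ (X t * q).support := by
    rw [support_X_mul]
    exact Finset.mem_map.mpr ⟨m, hm, rfl⟩
  have := h _ hmem s hs
  have hst : s ≠ t := fun e => hs (e ▸ ht)
  simpa [Finsupp.single_apply, hst.symm] using this

lemma totalDegree_lt_X_mul {t : Fin (n+1)} {q : SS} (hq : q ≠ 0) :
    q.totalDegree < (X t * q).totalDegree := by
  obtain ⟨m, hm⟩ := Finset.exists_mem_eq_sup q.support
    (support_nonempty.mpr hq) (fun s => s.sum fun _ e => e)
  have h1 : q.totalDegree = m.sum fun _ e => e := hm.2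
  have hmem : Finsupp.single t 1 + m ∈ (X t * q).support := by
    rw [support_X_mul]; exact Finset.mem_map.mpr ⟨m, hm.1, rfl⟩
  have h3 : ((Finsupp.single t 1 + m).sum fun _ e => e) = 1 + (m.sum fun _ e => e) := by
    rw [Finsupp.sum_add_index (by simp) (by intros; rfl)]
    rw [Finsupp.sum_single_index rfl]
  have h4 := le_totalDegree hmem
  rw [h3] at h4
  omega

/-- the `x_t`-free part of `p` -/
noncomputable def freePart (t : Fin (n+1)) (p : SS) : SS :=
  ∑ m ∈ p.support.filter (fun m => m t = 0), monomial m (coeff m p)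

lemma coeff_freePart (t : Fin (n+1)) (p : SS) (m : Fin (n+1) →₀ ℕ) :
    coeff m (freePart t p) = if m t = 0 then coeff m p else 0 := by
  classical
  rw [freePart, coeff_sum]
  simp only [coeff_monomial]
  rw [Finset.sum_ite_eq' (Finset.filter (fun m => m t = 0) p.support) m (fun x => coeff x p)]
  by_cases h0 : m t = 0 <;> by_cases hc : coeff m p = 0 <;>
    simp [Finset.mem_filter, mem_support_iff, h0, hc]

lemma suppIn_freePart {t : Fin (n+1)} {T : Finset (Fin (n+1))} {p : SS}
    (hp : SuppIn T p) : SuppIn (T.erase t) (freePart t p) := by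
  intro m hm s hs
  have hc := mem_support_iff.mp hm
  rw [coeff_freePart] at hc
  by_cases h0 : m t = 0
  · rw [if_pos h0] at hc
    by_cases hst : s = t
    · rw [hst]; exact h0
    · exact hp m (mem_support_iff.mpr hc) s (fun hsT => hs (Finset.mem_erase.mpr ⟨hst, hsT⟩))
  · rw [if_neg h0] at hc; exact absurd rfl hc

lemma X_dvd_sub_freePart (t : Fin (n+1)) (p : SS) : (X t : SS) ∣ (p - freePart t p) := by
  set q := p - freePart t p with hq
  have hco : ∀ m, coeff m q = if m t = 0 then 0 else coeff m p := by
    intro m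
    rw [hq, coeff_sub, coeff_freePart]
    split_ifs <;> ring
  have hsup : ∀ m ∈ q.support, m t ≠ 0 := by
    intro m hm
    have := mem_support_iff.mp hm
    rw [hco] at this
    intro h0
    rw [if_pos h0] at this
    exact this rfl
  have hrep : q = ∑ m ∈ q.support, monomial m (coeff m q) := (support_sum_monomial_coeff q).symm
  rw [hrep]
  exact Finset.dvd_sum fun m hm => (X_dvd_monomial).mpr (Or.inr (hsup m hm))

lemma freePart_ne_zero {t : Fin (n+1)} {p : SS} (h : ¬ (X t : SS) ∣ p) :
    freePart t p ≠ 0 := by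
  intro h0
  apply h
  have : p = p - freePart t p := by rw [h0, sub_zero]
  rw [this]
  exact X_dvd_sub_freePart t p

lemma cc_ne_zero_of_not_dvd {t : Fin (n+1)} {p : SS} (hs : SuppIn {t} p)
    (h : ¬ (X t : SS) ∣ p) : constantCoeff p ≠ 0 := by
  intro h0
  apply h
  have : ∀ m ∈ p.support, m t ≠ 0 := by
    intro m hm hmt
    have hm0 : m = 0 := by
      ext s
      by_cases hst : s = t
      · rw [hst]; exact hmt
      · exact hs m hm s (by simp [hst])
    have := mem_support_iff.mp hm
    rw [hm0] at this
    exact this (by rw [← constantCoeff_eq, h0])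
  -- X_dvd_of_suppIn inline
  have hrep : p = ∑ m ∈ p.support, monomial m (coeff m p) := (support_sum_monomial_coeff p).symm
  rw [hrep]
  exact Finset.dvd_sum fun m hm => (X_dvd_monomial).mpr (Or.inr (this m hm))

lemma finsuppLin_apply {A A' : Type} (L : (A →₀ SS) →ₗ[SS] (A' →₀ SS)) (y : A →₀ SS) (b' : A') :
    L y b' = y.sum fun a c => c * (L (Finsupp.single a 1) b') := by
  conv_lhs => rw [← Finsupp.sum_single y]
  rw [map_finsuppSum]
  rw [Finsupp.sum_apply]
  congr 1
  ext a c
  have : Finsupp.single a c = c • Finsupp.single a (1 : SS) := by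
    rw [Finsupp.smul_single, smul_eq_mul, mul_one]
  rw [this, map_smul, Finsupp.smul_apply, smul_eq_mul]

lemma ccLin {A A' : Type} (L : (A →₀ SS) →ₗ[SS] (A' →₀ SS))
    (hL : ∀ a b', constantCoeff (L (Finsupp.single a 1) b') = 0)
    (y : A →₀ SS) (b' : A') : constantCoeff (L y b') = 0 := by
  rw [finsuppLin_apply, Finsupp.sum, map_sum]
  refine Finset.sum_eq_zero fun a _ => ?_
  rw [map_mul, hL, mul_zero]

lemma linMemIdeal {A A' : Type} (L : (A →₀ SS) →ₗ[SS] (A' →₀ SS)) (I : Ideal SS)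
    (y : A →₀ SS) (hy : ∀ a, y a ∈ I) (b' : A') : L y b' ∈ I := by
  rw [finsuppLin_apply, Finsupp.sum]
  exact Submodule.sum_mem _ fun a _ => I.mul_mem_right _ (hy a)

lemma JU_empty : JU (k := k) (n := n) ∅ = ⊥ := by simp [JU]

lemma exists_finsupp_decomp {A : Type} (g : A →₀ SS) (U : Finset (Fin (n+1))) (x : Fin (n+1))
    (h : ∀ b, g b ∈ JU (insert x U)) :
    ∃ (v jf : A →₀ SS), (∀ b, jf b ∈ JU U) ∧ g = jf + (X x : SS) • v := by
  classical
  have hch : ∀ b : A, ∃ rq : SS × SS, rq.2 ∈ JU U ∧ g b = rq.2 + X x * rq.1 := by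
    intro b
    obtain ⟨r, q, hq, he⟩ := JU_insert_mem (h b)
    exact ⟨(r, q), hq, he⟩
  set fv : A → SS := fun b => if g b = 0 then 0 else (Classical.choose (hch b)).1 with hfv
  set fj : A → SS := fun b => if g b = 0 then 0 else (Classical.choose (hch b)).2 with hfj
  refine ⟨Finsupp.onFinset g.support fv ?_, Finsupp.onFinset g.support fj ?_, ?_, ?_⟩
  · intro b hb
    rw [Finsupp.mem_support_iff]
    intro h0
    exact hb (by rw [hfv]; simp [h0])
  · intro b hb
    rw [Finsupp.mem_support_iff]
    intro h0
    exact hb (by rw [hfj]; simp [h0])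
  · intro b
    simp only [Finsupp.onFinset_apply, hfj]
    by_cases h0 : g b = 0
    · simp [h0]
    · simp only [h0, if_neg, if_false]
      exact (Classical.choose_spec (hch b)).1
  · apply Finsupp.ext; intro b
    simp only [Finsupp.add_apply, Finsupp.smul_apply, Finsupp.onFinset_apply, smul_eq_mul, hfv, hfj]
    by_cases h0 : g b = 0
    · simp [h0]
    · simp only [h0, if_neg, if_false]
      exact (Classical.choose_spec (hch b)).2

end Stmt2Aux

section Stmt2Res
variable {k : Type} [Field k] {n : ℕ} {d : Fin (n+1) → ℕ}
variable {M : Type} [AddCommGroup M] [Module (MvPolynomial (Fin (n+1)) k) M] [Module k M]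
variable {𝒜 : ℤ → Submodule k M}
local notation "SS" => MvPolynomial (Fin (n+1)) k
variable (Fr : GradedFreeRes k n d M 𝒜) (ℓ : Fin (n+1))

lemma ccD (i : ℕ) (y : Fr.B (i+1) →₀ SS) (b' : Fr.B i) :
    constantCoeff (Fr.D i y b') = 0 :=
  ccLin (Fr.D i) (fun a b' => Fr.minimal i a b') y b'

lemma DD_zero (i : ℕ) (y : Fr.B (i+2) →₀ SS) : Fr.D i (Fr.D (i+1) y) = 0 :=
  (Fr.exact_succ i (Fr.D (i+1) y)).mpr ⟨y, rfl⟩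

lemma augD_zero (y : Fr.B 1 →₀ SS) : Fr.aug (Fr.D 0 y) = 0 :=
  (Fr.exact_zero (Fr.D 0 y)).mpr ⟨y, rfl⟩

lemma column_ne_zero (i : ℕ) (b : Fr.B (i+1)) : Fr.D i (Finsupp.single b 1) ≠ 0 := by
  intro h
  obtain ⟨y, hy⟩ := (Fr.exact_succ i (Finsupp.single b 1)).mp h
  have h1 : Fr.D (i+1) y b = 1 := by rw [hy]; simp
  have := ccD Fr (i+1) y b
  rw [h1] at this
  simp at this

lemma aug_column_ne_zero (b : Fr.B 0)
    (hneg : ∀ e : ℤ, e < 0 → 𝒜 e = ⊥) (hd : Fr.deg 0 b < 0) : False := by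
  have h0 : Fr.aug (Finsupp.single b 1) = 0 := by
    have := Fr.aug_hom b
    rw [hneg _ hd] at this
    simpa using this
  obtain ⟨y, hy⟩ := (Fr.exact_zero (Finsupp.single b 1)).mp h0
  have h1 : Fr.D 0 y b = 1 := by rw [hy]; simp
  have := ccD Fr 0 y b
  rw [h1] at this
  simp at this

/-- exactness modulo the variables in `U`, at homological spot `t+1` -/
def Eprop (U : Finset (Fin (n+1))) (t : ℕ) : Prop :=
  ∀ y : Fr.B (t+1) →₀ SS, (∀ b, (Fr.D t y) b ∈ JU U) →
    ∃ w : Fr.B (t+2) →₀ SS, ∀ b, (y - Fr.D (t+1) w) b ∈ JU U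

lemma E_empty (t : ℕ) : Eprop Fr ∅ t := by
  intro y hy
  have h0 : Fr.D t y = 0 := by
    apply Finsupp.ext; intro b
    simpa [JU_empty] using hy b
  obtain ⟨w, hw⟩ := (Fr.exact_succ t y).mp h0
  exact ⟨w, fun b => by simp [hw, JU_empty]⟩

lemma Ereg1 (hreg : ∀ m : M, (X ℓ : SS) • m = 0 → m = 0) : Eprop Fr {ℓ} 0 := by
  intro y hy
  obtain ⟨v, jf, hjf, he⟩ := exists_finsupp_decomp (Fr.D 0 y) ∅ ℓ
    (fun b => by simpa using hy b)
  have hjf0 : jf = 0 := by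
    apply Finsupp.ext; intro b
    simpa [JU_empty] using hjf b
  rw [hjf0] at he
  simp only [zero_add] at he
  have haug : (X ℓ : SS) • Fr.aug v = 0 := by
    rw [← map_smul, ← he, augD_zero]
  have hav : Fr.aug v = 0 := hreg _ haug
  obtain ⟨u, hu⟩ := (Fr.exact_zero v).mp hav
  have hker : Fr.D 0 (y - (X ℓ : SS) • u) = 0 := by
    rw [map_sub, map_smul, hu, ← he, sub_self]
  obtain ⟨w, hw⟩ := (Fr.exact_succ 0 _).mp hker
  refine ⟨w, fun b => ?_⟩
  have hw' : Fr.D 1 w = y - (X ℓ : SS) • u := hw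
  have : y - Fr.D 1 w = (X ℓ : SS) • u := by
    rw [hw']; abel
  rw [this, Finsupp.smul_apply, smul_eq_mul]
  exact Ideal.mul_mem_right _ _ (mem_JU_of _ ℓ (Finset.mem_singleton_self ℓ))

lemma Erec (t : ℕ) {x : Fin (n+1)} {U : Finset (Fin (n+1))} (hx : x ∉ U)
    (h1 : Eprop Fr U (t+1)) (h0 : Eprop Fr U t) : Eprop Fr (insert x U) (t+1) := by
  intro y hy
  obtain ⟨v, jf, hjf, he⟩ := exists_finsupp_decomp (Fr.D (t+1) y) U x hy
  have hDv : ∀ b, (Fr.D t v) b ∈ JU U := by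
    intro b
    have hz : Fr.D t (Fr.D (t+1) y) = 0 := DD_zero Fr t y
    rw [he, map_add, map_smul] at hz
    have hb : Fr.D t jf b + X x * (Fr.D t v) b = 0 := by
      have := congrArg (fun z => Finsupp.toFun z b) hz
      simpa [Finsupp.smul_apply] using congrFun (congrArg DFunLike.coe hz) b
    have hmem : (X x : SS) * (Fr.D t v) b ∈ JU U := by
      have : (X x : SS) * (Fr.D t v) b = -(Fr.D t jf b) := by linear_combination hb
      rw [this]
      exact Submodule.neg_mem _ (linMemIdeal (Fr.D t) (JU U) jf hjf b)
    exact JU_prime hx hmem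
  obtain ⟨u, hu⟩ := h0 v hDv
  have hy' : ∀ b, (Fr.D (t+1) (y - (X x : SS) • u)) b ∈ JU U := by
    intro b
    rw [map_sub, map_smul, he]
    have : (jf + (X x : SS) • v - (X x : SS) • Fr.D (t+1) u) b
        = jf b + X x * ((v - Fr.D (t+1) u) b) := by
      simp only [Finsupp.add_apply, Finsupp.sub_apply, Finsupp.smul_apply, smul_eq_mul]
      ring
    rw [this]
    exact Ideal.add_mem _ (hjf b) (Ideal.mul_mem_left _ _ (hu b))
  obtain ⟨w, hw⟩ := h1 _ hy'
  refine ⟨w, fun b => ?_⟩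
  have : (y - Fr.D (t+2) w) b = (y - (X x : SS) • u - Fr.D (t+2) w) b + X x * u b := by
    simp [Finsupp.smul_apply]; ring
  rw [this]
  exact Ideal.add_mem _ (JU_mono (Finset.subset_insert x U) (hw b))
    (Ideal.mul_mem_right _ _ (mem_JU_of _ x (Finset.mem_insert_self x U)))

lemma EA : ∀ (U : Finset (Fin (n+1))) (t : ℕ), U.card ≤ t → Eprop Fr U t := by
  intro U
  induction U using Finset.induction_on with
  | empty => intro t _; exact E_empty Fr t
  | insert x U hx ih =>
      intro t ht
      rw [Finset.card_insert_of_notMem hx] at ht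
      obtain ⟨t', rfl⟩ : ∃ t', t = t' + 1 := ⟨t - 1, by omega⟩
      exact Erec Fr t' hx (ih (t'+1) (by omega)) (ih t' (by omega))

lemma EB (hreg : ∀ m : M, (X ℓ : SS) • m = 0 → m = 0) :
    ∀ (V : Finset (Fin (n+1))), ℓ ∉ V → ∀ (t : ℕ), V.card ≤ t → Eprop Fr (insert ℓ V) t := by
  intro V
  induction V using Finset.induction_on with
  | empty =>
      intro _ t _
      induction t with
      | zero => exact Ereg1 Fr ℓ hreg
      | succ t iht => exact Erec Fr t (Finset.notMem_empty ℓ) (E_empty Fr (t+1)) (E_empty Fr t)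
  | insert x V hx ih =>
      intro hl t ht
      have hxl : x ≠ ℓ := fun h => hl (h ▸ Finset.mem_insert_self x V)
      have hlV : ℓ ∉ V := fun h => hl (Finset.mem_insert_of_mem h)
      rw [Finset.card_insert_of_notMem hx] at ht
      obtain ⟨t', rfl⟩ : ∃ t', t = t' + 1 := ⟨t - 1, by omega⟩
      have hswap : insert ℓ (insert x V) = insert x (insert ℓ V) := by ext s; simp [Finset.mem_insert]; tauto
      rw [hswap]
      have hxnot : x ∉ insert ℓ V := by
        simp only [Finset.mem_insert]
        rintro (h | h)
        · exact hxl h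
        · exact hx h
      exact Erec Fr t' hxnot (ih hlV (t'+1) (by omega)) (ih hlV t' (by omega))

/-- total degree sum of a finsupp of polynomials -/
noncomputable def degsum {A : Type} (z : A →₀ SS) : ℕ :=
  ∑ b ∈ z.support, (z b).totalDegree

lemma exists_div_finsupp {A : Type} (z : A →₀ SS) (t : Fin (n+1))
    (h : ∀ b, (X t : SS) ∣ z b) : ∃ z' : A →₀ SS, z = (X t : SS) • z' := by
  classical
  have hch : ∀ b, ∃ q : SS, z b = X t * q := fun b => (h b).elim fun q hq => ⟨q, hq⟩
  refine ⟨Finsupp.onFinset z.support (fun b => if h0 : z b = 0 then 0 else Classical.choose (hch b)) ?_, ?_⟩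
  · intro b hb
    rw [Finsupp.mem_support_iff]
    intro h0
    exact hb (by simp [h0])
  · apply Finsupp.ext; intro b
    rw [Finsupp.smul_apply, Finsupp.onFinset_apply, smul_eq_mul]
    by_cases h0 : z b = 0
    · simp [h0]
    · rw [dif_neg h0]; exact Classical.choose_spec (hch b)

lemma smul_X_support_eq {A : Type} {z z' : A →₀ SS} {t : Fin (n+1)}
    (he : z = (X t : SS) • z') : z.support = z'.support := by
  ext b
  have hb : z b = X t * z' b := by rw [he, Finsupp.smul_apply, smul_eq_mul]
  simp only [Finsupp.mem_support_iff, hb]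
  constructor
  · intro h h0; exact h (by rw [h0, mul_zero])
  · intro h h0; exact h ((mul_eq_zero.mp h0).resolve_left (X_ne_zero t))

lemma degsum_lt {A : Type} {z z' : A →₀ SS} {t : Fin (n+1)}
    (he : z = (X t : SS) • z') (hz : z ≠ 0) : degsum z' < degsum z := by
  have hsup := smul_X_support_eq he
  rw [degsum, degsum, hsup]
  refine Finset.sum_lt_sum_of_nonempty ?_ ?_
  · rw [← hsup]
    exact Finsupp.support_nonempty_iff.mpr hz
  · intro b hb
    have hb' : z' b ≠ 0 := Finsupp.mem_support_iff.mp hb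
    have : z b = X t * z' b := by rw [he, Finsupp.smul_apply, smul_eq_mul]
    rw [this]
    exact totalDegree_lt_X_mul hb'

lemma mem_JU_of_dvd {U : Finset (Fin (n+1))} {t : Fin (n+1)} (ht : t ∈ U) {p : SS}
    (h : (X t : SS) ∣ p) : p ∈ JU U := by
  obtain ⟨c, rfl⟩ := h
  exact Ideal.mul_mem_right _ _ (mem_JU_of U t ht)

lemma cc_ne_zero_of_suppIn_empty {p : SS} (hp : SuppIn ∅ p) (h0 : p ≠ 0) :
    constantCoeff p ≠ 0 := by
  obtain ⟨m, hm⟩ := support_nonempty.mpr h0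
  have hm0 : m = 0 := Finsupp.ext fun t => hp m hm t (Finset.notMem_empty t)
  rw [constantCoeff_eq, ← hm0]
  exact mem_support_iff.mp hm

lemma getE {U : Finset (Fin (n+1))} {s : ℕ}
    (hreg : ∀ m : M, (X ℓ : SS) • m = 0 → m = 0)
    (h : U.card ≤ s ∨ (U.card = s + 1 ∧ ℓ ∈ U)) : Eprop Fr U s := by
  rcases h with h | ⟨hc, hl⟩
  · exact EA Fr U s h
  · have he : insert ℓ (U.erase ℓ) = U := Finset.insert_erase hl
    rw [← he]
    refine EB Fr ℓ hreg (U.erase ℓ) (Finset.notMem_erase ℓ U) s ?_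
    have := Finset.card_erase_of_mem hl
    omega

lemma MLfinish {s : ℕ} {U : Finset (Fin (n+1))} (hE : Eprop Fr U s)
    (z : Fr.B (s+1) →₀ SS) (hD : ∀ b, (Fr.D s z) b ∈ JU U) (b₀ : Fr.B (s+1))
    (hcc : constantCoeff (z b₀) ≠ 0) : False := by
  obtain ⟨w, hw⟩ := hE z hD
  have h1 := cc_JU (hw b₀)
  have h2 : (z - Fr.D (s+1) w) b₀ = z b₀ - Fr.D (s+1) w b₀ := by simp
  rw [h2, map_sub, ccD] at h1
  rw [sub_zero] at h1
  exact hcc h1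

lemma freePart_zero (t : Fin (n+1)) : freePart (k := k) (n := n) t 0 = 0 := by
  simp [freePart]

theorem ML (Fr : GradedFreeRes k n d M 𝒜) (ℓ : Fin (n+1))
    (hreg : ∀ m : M, (X ℓ : SS) • m = 0 → m = 0) (s : ℕ)
    (T U : Finset (Fin (n+1))) (hdisj : Disjoint T U)
    (hyp : ((T ∪ U).card ≤ s + 1 ∧ (T.Nonempty ∨ U.card ≤ s)) ∨
      ((T ∪ U).card = s + 2 ∧ ℓ ∈ T ∪ U ∧ (T \ {ℓ}).Nonempty))
    (z : Fr.B (s+1) →₀ SS) (hz : z ≠ 0)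
    (hsupp : ∀ b, SuppIn T (z b)) (hD : ∀ b, (Fr.D s z) b ∈ JU U) : False := by
  classical
  have hcardTU : (T ∪ U).card = T.card + U.card := by
    rw [Finset.card_union_of_disjoint hdisj]
  rcases Finset.eq_empty_or_nonempty T with hT | hTne
  · -- base case : all components are constants
    subst hT
    have hU : U.card ≤ s := by
      rcases hyp with ⟨_, h2⟩ | ⟨_, _, h3⟩
      · rcases h2 with h | h
        · exact absurd h (by simp)
        · exact h
      · exact absurd h3 (by simp)
    obtain ⟨b₀, hb₀⟩ : ∃ b₀, z b₀ ≠ 0 := by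
      by_contra hc
      push_neg at hc
      exact hz (Finsupp.ext fun b => hc b)
    exact MLfinish Fr (getE Fr ℓ hreg (Or.inl hU)) z hD b₀
      (cc_ne_zero_of_suppIn_empty (hsupp b₀) hb₀)
  · -- T nonempty : pick the peeling variable t
    set t : Fin (n+1) := if ℓ ∈ T then ℓ else hTne.choose with htdef
    have htT : t ∈ T := by
      rw [htdef]
      split
      · assumption
      · exact hTne.choose_spec
    have htU : t ∉ U := fun h => (Finset.disjoint_left.mp hdisj htT) h
    by_cases hdvd : ∀ b, (X t : SS) ∣ z b
    · -- divide by X t and recurse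
      obtain ⟨z', he⟩ := exists_div_finsupp z t hdvd
      have hz' : z' ≠ 0 := by
        intro h0
        exact hz (by rw [he, h0, smul_zero])
      have hsupp' : ∀ b, SuppIn T (z' b) := by
        intro b
        have : z b = X t * z' b := by rw [he, Finsupp.smul_apply, smul_eq_mul]
        exact suppIn_of_X_mul htT (this ▸ hsupp b)
      have hD' : ∀ b, (Fr.D s z') b ∈ JU U := by
        intro b
        have h1 : (Fr.D s z) b = X t * (Fr.D s z') b := by
          rw [he, map_smul, Finsupp.smul_apply, smul_eq_mul]
        exact JU_prime htU (by rw [← h1]; exact hD b)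
      have hlt : degsum z' < degsum z := degsum_lt he hz
      exact ML Fr ℓ hreg s T U hdisj hyp z' hz' hsupp' hD'
    · push_neg at hdvd
      obtain ⟨b₀, hb₀⟩ := hdvd
      by_cases hT1 : T.card = 1
      · -- final case : T = {t}
        have hTt : T = {t} := Finset.eq_singleton_iff_unique_mem.mpr
          ⟨htT, fun x hx => Finset.card_le_one.mp (le_of_eq hT1) x hx t htT⟩
        have hsing : SuppIn {t} (z b₀) := by rw [← hTt]; exact hsupp b₀
        have hcc : constantCoeff (z b₀) ≠ 0 := cc_ne_zero_of_not_dvd hsing hb₀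
        have hE : Eprop Fr U s := by
          apply getE Fr ℓ hreg
          rcases hyp with ⟨h1, _⟩ | ⟨h1, h2, h3⟩
          · left; omega
          · right
            obtain ⟨v, hv⟩ := h3
            rw [hTt] at hv
            simp only [Finset.mem_sdiff, Finset.mem_singleton] at hv
            have htℓ : t ≠ ℓ := by
              rcases hv with ⟨rfl, hne⟩; exact hne
            have hℓU : ℓ ∈ U := by
              rcases Finset.mem_union.mp h2 with h | h
              · rw [hTt] at h; exact absurd (Finset.mem_singleton.mp h).symm htℓ
              · exact h
            have hcT : T.card = 1 := hT1
            exact ⟨by omega, hℓU⟩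
        exact MLfinish Fr hE z hD b₀ hcc
      · -- split off the x_t - free part and recurse with T.erase t
        have hT2 : 2 ≤ T.card := by
          have := Finset.card_pos.mpr hTne
          omega
        set z'' : Fr.B (s+1) →₀ SS :=
          Finsupp.onFinset z.support (fun b => freePart t (z b)) (by
            intro b hb
            rw [Finsupp.mem_support_iff]
            intro h0
            exact hb (show freePart t (z b) = 0 by rw [h0, freePart_zero])) with hz''def
        have hz''app : ∀ b, z'' b = freePart t (z b) := fun b => rfl
        have hz''ne : z'' ≠ 0 := by
          intro h0
          have : z'' b₀ = 0 := by rw [h0]; rfl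
          rw [hz''app] at this
          exact freePart_ne_zero hb₀ this
        have hsupp'' : ∀ b, SuppIn (T.erase t) (z'' b) := by
          intro b
          rw [hz''app]
          exact suppIn_freePart (hsupp b)
        have hdiff : ∀ b, (z - z'') b ∈ JU (insert t U) := by
          intro b
          have : (z - z'') b = z b - freePart t (z b) := by
            rw [Finsupp.sub_apply, hz''app]
          rw [this]
          exact mem_JU_of_dvd (Finset.mem_insert_self t U) (X_dvd_sub_freePart t (z b))
        have hD'' : ∀ b, (Fr.D s z'') b ∈ JU (insert t U) := by
          intro b
          have h1 : (Fr.D s z'') b = (Fr.D s z) b - (Fr.D s (z - z'')) b := by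
            rw [map_sub, Finsupp.sub_apply]; ring
          rw [h1]
          refine Submodule.sub_mem _ ?_ ?_
          · exact JU_mono (Finset.subset_insert t U) (hD b)
          · exact linMemIdeal (Fr.D s) _ _ hdiff b
        have hdisj' : Disjoint (T.erase t) (insert t U) := by
          rw [Finset.disjoint_left]
          intro a ha
          have h1 := Finset.mem_erase.mp ha
          simp only [Finset.mem_insert]
          rintro (h | h)
          · exact h1.1 h
          · exact Finset.disjoint_left.mp hdisj h1.2 h
        have hunion : (T.erase t) ∪ (insert t U) = T ∪ U := by
          ext a
          simp only [Finset.mem_union, Finset.mem_erase, Finset.mem_insert]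
          constructor
          · rintro (⟨_, h⟩ | (rfl | h))
            · exact Or.inl h
            · exact Or.inl htT
            · exact Or.inr h
          · rintro (h | h)
            · by_cases hat : a = t
              · exact Or.inr (Or.inl hat)
              · exact Or.inl ⟨hat, h⟩
            · exact Or.inr (Or.inr h)
        have hyp' : (((T.erase t) ∪ (insert t U)).card ≤ s + 1 ∧
              ((T.erase t).Nonempty ∨ (insert t U).card ≤ s)) ∨
            (((T.erase t) ∪ (insert t U)).card = s + 2 ∧ ℓ ∈ (T.erase t) ∪ (insert t U) ∧
              ((T.erase t) \ {ℓ}).Nonempty) := by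
          have hce : (T.erase t).card = T.card - 1 := Finset.card_erase_of_mem htT
          have hene : (T.erase t).Nonempty := by
            rw [← Finset.card_pos, hce]; omega
          rcases hyp with ⟨h1, _⟩ | ⟨h1, h2, h3⟩
          · left
            rw [hunion]
            exact ⟨h1, Or.inl hene⟩
          · right
            rw [hunion]
            refine ⟨h1, h2, ?_⟩
            by_cases hlT : ℓ ∈ T
            · -- then t = ℓ, and (T.erase ℓ) \ {ℓ} = T.erase ℓ is nonempty
              have htl : t = ℓ := by rw [htdef, if_pos hlT]
              obtain ⟨a, ha⟩ := hene
              refine ⟨a, Finset.mem_sdiff.mpr ⟨ha, ?_⟩⟩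
              rw [Finset.mem_singleton]
              intro h
              exact (Finset.mem_erase.mp ha).1 (by rw [h, htl])
            · obtain ⟨a, ha⟩ := hene
              refine ⟨a, Finset.mem_sdiff.mpr ⟨ha, ?_⟩⟩
              rw [Finset.mem_singleton]
              intro h
              exact hlT (Finset.mem_of_mem_erase (h ▸ ha))
        have hcard : (T.erase t).card < T.card := Finset.card_erase_lt_of_mem htT
        exact ML Fr ℓ hreg s (T.erase t) (insert t U) hdisj' hyp' z'' hz''ne hsupp'' hD''
termination_by (T.card, degsum z)
decreasing_by
  · exact Prod.Lex.right _ hlt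
  · exact Prod.Lex.left _ _ hcard

theorem ML0 (Fr : GradedFreeRes k n d M 𝒜) (ℓ : Fin (n+1))
    (hreg : ∀ m : M, (X ℓ : SS) • m = 0 → m = 0)
    (z : Fr.B 0 →₀ SS) (hz : z ≠ 0)
    (hsupp : ∀ b, SuppIn {ℓ} (z b)) (haug : Fr.aug z = 0) : False := by
  classical
  by_cases hdvd : ∀ b, (X ℓ : SS) ∣ z b
  · obtain ⟨z', he⟩ := exists_div_finsupp z ℓ hdvd
    have hz' : z' ≠ 0 := fun h0 => hz (by rw [he, h0, smul_zero])
    have hsupp' : ∀ b, SuppIn {ℓ} (z' b) := by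
      intro b
      have : z b = X ℓ * z' b := by rw [he, Finsupp.smul_apply, smul_eq_mul]
      exact suppIn_of_X_mul (Finset.mem_singleton_self ℓ) (this ▸ hsupp b)
    have haug' : Fr.aug z' = 0 := by
      apply hreg
      rw [← map_smul, ← he, haug]
    have hlt : degsum z' < degsum z := degsum_lt he hz
    exact ML0 Fr ℓ hreg z' hz' hsupp' haug'
  · push_neg at hdvd
    obtain ⟨b₀, hb₀⟩ := hdvd
    have hcc : constantCoeff (z b₀) ≠ 0 := cc_ne_zero_of_not_dvd (hsupp b₀) hb₀
    obtain ⟨w, hw⟩ := (Fr.exact_zero z).mp haug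
    have h1 : z b₀ = Fr.D 0 w b₀ := by rw [hw]
    rw [h1, ccD] at hcc
    exact hcc rfl
termination_by degsum z

/-- the sum of the weights of the variables of index `< m` -/
def Wsum (d : Fin (n+1) → ℕ) (m : ℕ) : ℤ :=
  ∑ t ∈ Finset.univ.filter (fun t : Fin (n+1) => (t : ℕ) < m), (d t : ℤ)

/-- the modified weight lower bound -/
def w' (d : Fin (n+1) → ℕ) (ℓ : Fin (n+1)) (m : ℕ) : ℤ :=
  if m < (ℓ : ℕ) then Wsum d m else Wsum d (m+1) - d ℓ

lemma Wsum_zero : Wsum d 0 = 0 := by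
  rw [Wsum]
  rw [Finset.filter_false_of_mem (fun t _ => by omega)]
  simp

lemma Wsum_step {m : ℕ} (hm : m < n + 1) :
    Wsum d (m+1) = Wsum d m + d ⟨m, hm⟩ := by
  rw [Wsum, Wsum]
  have : Finset.univ.filter (fun t : Fin (n+1) => (t : ℕ) < m + 1)
      = insert ⟨m, hm⟩ (Finset.univ.filter (fun t : Fin (n+1) => (t : ℕ) < m)) := by
    ext a
    simp only [Finset.mem_filter, Finset.mem_univ, true_and, Finset.mem_insert, Fin.ext_iff]
    omega
  rw [this, Finset.sum_insert (by simp)]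
  ring

lemma Wsum_stable {m : ℕ} (hm : n + 1 ≤ m) : Wsum d (m+1) = Wsum d m := by
  rw [Wsum, Wsum]
  congr 1
  ext a
  simp only [Finset.mem_filter, Finset.mem_univ, true_and]
  have := a.isLt
  omega

lemma card_filter_lt (m : ℕ) (hm : m ≤ n + 1) :
    (Finset.univ.filter (fun t : Fin (n+1) => (t : ℕ) < m)).card = m := by
  have : Finset.univ.filter (fun t : Fin (n+1) => (t : ℕ) < m)
      = Finset.map (Fin.castLEEmb hm) Finset.univ := by
    ext a
    simp only [Finset.mem_filter, Finset.mem_univ, true_and, Finset.mem_map]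
    constructor
    · intro h
      exact ⟨⟨(a : ℕ), h⟩, by ext; simp⟩
    · rintro ⟨x, rfl⟩
      simp
  rw [this, Finset.card_map, Finset.card_univ, Fintype.card_fin]

lemma card_filter_lt_le (m : ℕ) :
    (Finset.univ.filter (fun t : Fin (n+1) => (t : ℕ) < m)).card ≤ m := by
  classical
  calc (Finset.univ.filter (fun t : Fin (n+1) => (t : ℕ) < m)).card
      ≤ (Finset.range m).card := by
        refine Finset.card_le_card_of_injOn (fun t => (t : ℕ)) ?_ ?_
        · intro a ha
          rw [Finset.mem_coe, Finset.mem_filter] at ha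
          exact Finset.mem_range.mpr ha.2
        · intro a _ b _ hab
          exact Fin.val_injective hab
    _ = m := Finset.card_range m

lemma w'_zero (ℓ : Fin (n+1)) : w' d ℓ 0 = 0 := by
  rw [w']
  by_cases h : 0 < (ℓ : ℕ)
  · rw [if_pos h, Wsum_zero]
  · rw [if_neg h]
    have hl0 : (ℓ : ℕ) = 0 := by omega
    have hdl : d ℓ = d ⟨0, by omega⟩ := congrArg d (Fin.ext hl0)
    have : Wsum d 1 = (d ℓ : ℤ) := by
      rw [Wsum_step (by omega : 0 < n + 1), Wsum_zero, hdl]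
      ring
    rw [this]
    ring

lemma WH_suppIn {p : SS} {e : ℤ}
    (hp : p ∈ weightedHomogeneousSubmodule k (fun t : Fin (n+1) => (d t : ℤ)) e)
    {T : Finset (Fin (n+1))} (he : ∀ t ∉ T, e < (d t : ℤ)) : SuppIn T p := by
  intro m hm t ht
  by_contra h0
  have hw : Finsupp.weight (fun t : Fin (n+1) => (d t : ℤ)) m = e :=
    hp (mem_support_iff.mp hm)
  have hts : t ∈ m.support := Finsupp.mem_support_iff.mpr h0
  have h1 : (m t : ℤ) * (d t : ℤ) ≤ Finsupp.weight (fun t : Fin (n+1) => (d t : ℤ)) m := by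
    rw [Finsupp.weight_apply, Finsupp.sum]
    have hnn : ∀ s ∈ m.support, (0:ℤ) ≤ m s • (d s : ℤ) := by
      intro s _
      exact nsmul_nonneg (by positivity) _
    have hle := Finset.single_le_sum hnn hts
    have heq : m t • (d t : ℤ) = (m t : ℤ) * (d t : ℤ) := by
      rw [nsmul_eq_mul]
    rw [heq] at hle
    exact hle
  have h2 : (d t : ℤ) ≤ (m t : ℤ) * (d t : ℤ) := by
    have hge : (1:ℤ) ≤ (m t : ℤ) := by exact_mod_cast Nat.one_le_iff_ne_zero.mpr h0
    nlinarith [Int.ofNat_nonneg (d t)]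
  have h3 := he t ht
  omega

lemma delta1 (ℓ : Fin (n+1)) {i : ℕ} (hi : i < (ℓ : ℕ)) (hin : i < n+1) :
    w' d ℓ (i+1) - w' d ℓ i = d ⟨i, hin⟩ := by
  by_cases h2 : i + 1 < (ℓ : ℕ)
  · rw [w', w', if_pos h2, if_pos hi, Wsum_step hin]
    ring
  · have hl : (ℓ : ℕ) = i + 1 := by omega
    have hin2 : i + 1 < n + 1 := by have := ℓ.isLt; omega
    have hdl : (d ℓ : ℤ) = (d ⟨i+1, hin2⟩ : ℤ) := by
      exact_mod_cast congrArg (fun x => ((d x : ℕ) : ℤ)) (Fin.ext hl)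
    rw [w', w', if_neg h2, if_pos hi, Wsum_step hin2, Wsum_step hin, hdl]
    ring

lemma delta2 (ℓ : Fin (n+1)) {i : ℕ} (hi : (ℓ : ℕ) ≤ i) :
    w' d ℓ (i+1) - w' d ℓ i = Wsum d (i+2) - Wsum d (i+1) := by
  rw [w', w', if_neg (by omega), if_neg (by omega)]
  ring

theorem degBound (Fr : GradedFreeRes k n d M 𝒜) (ℓ : Fin (n+1))
    (hmono : Monotone d)
    (hneg : ∀ e : ℤ, e < 0 → 𝒜 e = ⊥)
    (hreg : ∀ m : M, (X ℓ : SS) • m = 0 → m = 0) :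
    ∀ i (b : Fr.B i), w' d ℓ i ≤ Fr.deg i b := by
  intro i
  induction i with
  | zero =>
      intro b
      rw [w'_zero]
      by_contra h
      push_neg at h
      exact aug_column_ne_zero Fr b hneg h
  | succ i ih =>
      intro b
      by_contra hj
      push_neg at hj
      set T : Finset (Fin (n+1)) :=
        Finset.univ.filter (fun t : Fin (n+1) => (d t : ℤ) < w' d ℓ (i+1) - w' d ℓ i) with hT
      have hTmem : ∀ t : Fin (n+1), t ∈ T ↔ (d t : ℤ) < w' d ℓ (i+1) - w' d ℓ i := by
        intro t; simp [hT]
      set z := Fr.D i (Finsupp.single b 1) with hzdef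
      have hz : z ≠ 0 := column_ne_zero Fr i b
      have hsupp : ∀ b', SuppIn T (z b') := by
        intro b'
        refine WH_suppIn (Fr.homog i b b') ?_
        intro t ht
        have h1 : ¬ ((d t : ℤ) < w' d ℓ (i+1) - w' d ℓ i) := fun hc => ht ((hTmem t).mpr hc)
        have h2 := ih b'
        omega
      rcases Nat.eq_zero_or_pos i with hi0 | hipos
      · subst hi0
        have hn01 : 0 < n + 1 := by omega
        have hTl : T ⊆ {ℓ} := by
          intro t htm
          have h1 : (d t : ℤ) < w' d ℓ 1 - w' d ℓ 0 := (hTmem t).mp htm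
          rw [Finset.mem_singleton]
          by_cases hl0 : 0 < (ℓ : ℕ)
          · exfalso
            have hd1 : w' d ℓ 1 - w' d ℓ 0 = (d ⟨0, hn01⟩ : ℤ) := delta1 (d := d) ℓ hl0 hn01
            have hmt : (d ⟨0, hn01⟩ : ℤ) ≤ (d t : ℤ) := by
              exact_mod_cast hmono (by simp [Fin.le_def])
            omega
          · have hll : (ℓ : ℕ) = 0 := by omega
            have hd2 : w' d ℓ 1 - w' d ℓ 0 = Wsum d 2 - Wsum d 1 :=
              delta2 (d := d) ℓ (by omega)
            by_cases hn : 1 < n + 1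
            · have hst : Wsum d 2 = Wsum d 1 + (d ⟨1, hn⟩ : ℤ) := Wsum_step hn
              have htv : (t : ℕ) < 1 := by
                by_contra hc
                push_neg at hc
                have : (d ⟨1, hn⟩ : ℤ) ≤ (d t : ℤ) := by
                  exact_mod_cast hmono (by simpa [Fin.le_def] using hc)
                omega
              exact Fin.ext (by omega)
            · have hn0 : n + 1 ≤ 1 := by omega
              have hst : Wsum d 2 = Wsum d 1 := Wsum_stable hn0
              have : (0:ℤ) ≤ (d t : ℤ) := by positivity
              omega
        have haug : Fr.aug z = 0 := augD_zero Fr (Finsupp.single b 1)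
        exact ML0 Fr ℓ hreg z hz (fun b' => suppIn_mono hTl (hsupp b')) haug
      · obtain ⟨s, rfl⟩ : ∃ s, i = s + 1 := ⟨i - 1, by omega⟩
        have hcard : T.card ≤ s + 1 ∨ (T.card = s + 2 ∧ ℓ ∈ T ∧ (T \ {ℓ}).Nonempty) := by
          by_cases hi : (s + 1 : ℕ) < (ℓ : ℕ)
          · left
            have hin : s + 1 < n + 1 := by have := ℓ.isLt; omega
            have hd1 : w' d ℓ (s+2) - w' d ℓ (s+1) = (d ⟨s+1, hin⟩ : ℤ) :=
              delta1 (d := d) ℓ hi hin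
            have hsub : T ⊆ Finset.univ.filter (fun t : Fin (n+1) => (t : ℕ) < s + 1) := by
              intro t htm
              have h1 : (d t : ℤ) < w' d ℓ (s+2) - w' d ℓ (s+1) := (hTmem t).mp htm
              simp only [Finset.mem_filter, Finset.mem_univ, true_and]
              by_contra hc
              push_neg at hc
              have : (d ⟨s+1, hin⟩ : ℤ) ≤ (d t : ℤ) := by
                exact_mod_cast hmono (by simpa [Fin.le_def] using hc)
              omega
            calc T.card ≤ _ := Finset.card_le_card hsub
              _ ≤ s + 1 := card_filter_lt_le (s+1)
          · have hli : (ℓ : ℕ) ≤ s + 1 := by omega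
            have hd2 : w' d ℓ (s+2) - w' d ℓ (s+1) = Wsum d (s+3) - Wsum d (s+2) :=
              delta2 (d := d) ℓ hli
            by_cases hn : s + 2 < n + 1
            · have hst : Wsum d (s+3) = Wsum d (s+2) + (d ⟨s+2, hn⟩ : ℤ) := Wsum_step hn
              have hsub : T ⊆ Finset.univ.filter (fun t : Fin (n+1) => (t : ℕ) < s + 2) := by
                intro t htm
                have h1 : (d t : ℤ) < w' d ℓ (s+2) - w' d ℓ (s+1) := (hTmem t).mp htm
                simp only [Finset.mem_filter, Finset.mem_univ, true_and]
                by_contra hc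
                push_neg at hc
                have : (d ⟨s+2, hn⟩ : ℤ) ≤ (d t : ℤ) := by
                  exact_mod_cast hmono (by simpa [Fin.le_def] using hc)
                omega
              by_cases hc : T.card ≤ s + 1
              · exact Or.inl hc
              · right
                push_neg at hc
                have hfc : (Finset.univ.filter (fun t : Fin (n+1) => (t : ℕ) < s + 2)).card = s + 2 :=
                  card_filter_lt (s+2) (by omega)
                have hTeq : T = Finset.univ.filter (fun t : Fin (n+1) => (t : ℕ) < s + 2) := by
                  apply Finset.eq_of_subset_of_card_le hsub
                  omega
                have hlT : ℓ ∈ T := by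
                  rw [hTeq]
                  simp only [Finset.mem_filter, Finset.mem_univ, true_and]
                  omega
                refine ⟨by rw [hTeq]; exact hfc, hlT, ?_⟩
                rw [← Finset.card_pos, Finset.card_sdiff_of_subset (Finset.singleton_subset_iff.mpr hlT)]
                rw [hTeq, hfc]
                simp
            · left
              have hn0 : n + 1 ≤ s + 2 := by omega
              have hst : Wsum d (s+3) = Wsum d (s+2) := Wsum_stable hn0
              have hTe : T = ∅ := by
                rw [Finset.eq_empty_iff_forall_notMem]
                intro t htm
                have h1 : (d t : ℤ) < w' d ℓ (s+2) - w' d ℓ (s+1) := (hTmem t).mp htm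
                have : (0:ℤ) ≤ (d t : ℤ) := by positivity
                omega
              rw [hTe]
              simp
        have hD : ∀ b'', (Fr.D s z) b'' ∈ JU (∅ : Finset (Fin (n+1))) := by
          intro b''
          have hzz : Fr.D s z = 0 := DD_zero Fr s (Finsupp.single b 1)
          rw [hzz]
          simp only [Finsupp.coe_zero, Pi.zero_apply]
          exact Submodule.zero_mem _
        refine ML Fr ℓ hreg s T ∅ (Finset.disjoint_right.mpr (fun _ h => by simp at h)) ?_ z hz hsupp hD
        rcases hcard with h | ⟨h1, h2, h3⟩
        · left
          rw [Finset.union_empty]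
          exact ⟨by omega, Or.inr (by simp)⟩
        · right
          rw [Finset.union_empty]
          exact ⟨by omega, h2, h3⟩

end Stmt2Res

/-!
STATEMENT 2: `S = k[x_0,...,x_n]` with `deg x_t = d t`, `d 0 ≤ ... ≤ d n` positive;
`M` a finitely generated graded `S`-module with `M_0 ≠ 0`, `M_{<0} = 0`, and suppose
the variable `x_ℓ` is a non-zero-divisor on `M`.  Define `w'_i = w_i` for `i < ℓ` and
`w'_i = w_{i+1} - d ℓ` for `i ≥ ℓ` (where `w_i` is the sum of the `i` smallest
weights).  Then `β_{i,j}(M) ≠ 0` implies `j ≥ w'_i`.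
-/
theorem stmt_2 (k : Type) [Field k] (n : ℕ) (d : Fin (n + 1) → ℕ)
    (hmono : Monotone d) (hpos : ∀ t, 0 < d t)
    (M : Type) [AddCommGroup M] [Module (MvPolynomial (Fin (n + 1)) k) M]
    [Module k M] [IsScalarTower k (MvPolynomial (Fin (n + 1)) k) M]
    (𝒜 : ℤ → Submodule k M)
    (hdec : DirectSum.IsInternal 𝒜)
    (hgr : ∀ (t : Fin (n + 1)) (e : ℤ), ∀ m ∈ 𝒜 e,
      (X t : MvPolynomial (Fin (n + 1)) k) • m ∈ 𝒜 (e + d t))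
    (hfg : Module.Finite (MvPolynomial (Fin (n + 1)) k) M)
    (hneg : ∀ e : ℤ, e < 0 → 𝒜 e = ⊥) (h0 : 𝒜 0 ≠ ⊥)
    (ℓ : Fin (n + 1))
    (hreg : ∀ m : M, (X ℓ : MvPolynomial (Fin (n + 1)) k) • m = 0 → m = 0)
    (Fr : GradedFreeRes k n d M 𝒜)
    (i : ℕ) (j : ℤ) (hβ : ∃ b : Fr.B i, Fr.deg i b = j) :
    (if i < (ℓ : ℕ) then
        ∑ t ∈ Finset.univ.filter (fun t : Fin (n + 1) => (t : ℕ) < i), (d t : ℤ)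
      else
        (∑ t ∈ Finset.univ.filter (fun t : Fin (n + 1) => (t : ℕ) < i + 1), (d t : ℤ)) - d ℓ)
      ≤ j := by
  obtain ⟨b, rfl⟩ := hβ
  have := degBound Fr ℓ hmono hneg hreg i b
  simpa [w', Wsum] using this
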